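/- Let V be a type of propositional variables and let Φ be a finite set of clauses over V such that every clause of Φ has exactly n variables. If the cardinality of Φ is strictly less than 2^n, then there exists an assignment a : V → Bool that satisfies every clause of Φ. -/

import Mathlib

/-- If every clause of a finite CNF `Φ` has exactly `n` variables and `Φ` has fewer
than `2^n` clauses, then `Φ` is satisfiable.  A clause is a pair `(S, φ)` of its
variable set `S` and the forbidden assignment `φ` on `S`; an assignment `a`
satisfies it iff `a` differs from `φ` on some variable of `S`. -/
theorem cnf_satisfiable_of_card_lt {V : Type*} (n : ℕ)
    (Φ : Finset (Finset V × (V → Bool)))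
    (hvar : ∀ C ∈ Φ, C.1.card = n) (hcard : Φ.card < 2 ^ n) :
    ∃ a : V → Bool, ∀ C ∈ Φ, ∃ v ∈ C.1, a v ≠ C.2 v := by
  classical
  rcases Φ.eq_empty_or_nonempty with rfl | ⟨C0, hC0⟩
  · exact ⟨fun _ => true, by simp⟩
  set U : Finset V := Φ.sup Prod.fst with hU
  have hsub : ∀ C ∈ Φ, C.1 ⊆ U := fun C hC => Finset.le_sup hC
  have hnU : n ≤ U.card := (hvar C0 hC0) ▸ Finset.card_le_card (hsub C0 hC0)
  set bad : (Finset V × (V → Bool)) → Finset (Finset V) :=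
    fun C => U.powerset.filter (fun T => ∀ v ∈ C.1, decide (v ∈ T) = C.2 v) with hbad
  have hbadcard : ∀ C ∈ Φ, (bad C).card ≤ 2 ^ (U.card - n) := by
    intro C hC
    have hle : (bad C).card ≤ ((U \ C.1).powerset).card := by
      apply Finset.card_le_card_of_injOn (fun T => T \ C.1)
      · intro T hT
        simp only [Finset.mem_coe, hbad, Finset.mem_filter, Finset.mem_powerset] at hT ⊢
        exact Finset.sdiff_subset_sdiff hT.1 le_rfl
      · intro T1 h1 T2 h2 heq
        simp only [Finset.mem_coe, hbad, Finset.mem_filter, Finset.mem_powerset] at h1 h2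
        simp only [] at heq
        ext v
        by_cases hv : v ∈ C.1
        · have e1 := h1.2 v hv
          have e2 := h2.2 v hv
          constructor <;> intro hvT
          · have : decide (v ∈ T1) = true := by simpa using hvT
            have : decide (v ∈ T2) = true := by rw [e2, ← e1]; exact this
            simpa using this
          · have : decide (v ∈ T2) = true := by simpa using hvT
            have : decide (v ∈ T1) = true := by rw [e1, ← e2]; exact this
            simpa using this
        · constructor <;> intro hvT
          · have : v ∈ T1 \ C.1 := Finset.mem_sdiff.mpr ⟨hvT, hv⟩
            rw [heq] at this
            exact (Finset.mem_sdiff.mp this).1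
          · have : v ∈ T2 \ C.1 := Finset.mem_sdiff.mpr ⟨hvT, hv⟩
            rw [← heq] at this
            exact (Finset.mem_sdiff.mp this).1
    calc (bad C).card ≤ ((U \ C.1).powerset).card := hle
      _ = 2 ^ (U.card - n) := by
          rw [Finset.card_powerset, Finset.card_sdiff_of_subset (hsub C hC), hvar C hC]
  have hunion : (Φ.biUnion bad).card < 2 ^ U.card := by
    calc (Φ.biUnion bad).card ≤ ∑ C ∈ Φ, (bad C).card := Finset.card_biUnion_le
      _ ≤ Φ.card * 2 ^ (U.card - n) := by
          simpa using Finset.sum_le_card_nsmul Φ _ _ hbadcard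
      _ < 2 ^ n * 2 ^ (U.card - n) := by
          exact Nat.mul_lt_mul_of_lt_of_le hcard le_rfl (Nat.pos_of_ne_zero (by positivity))
      _ = 2 ^ U.card := by rw [← pow_add]; congr 1; omega
  have hex : ∃ T ∈ U.powerset, T ∉ Φ.biUnion bad := by
    by_contra h
    push_neg at h
    have hsub2 : U.powerset ⊆ Φ.biUnion bad := h
    have := Finset.card_le_card hsub2
    rw [Finset.card_powerset] at this
    omega
  obtain ⟨T, hTU, hTbad⟩ := hex
  refine ⟨fun v => decide (v ∈ T), ?_⟩
  intro C hC
  have hTnot : T ∉ bad C := fun h => hTbad (Finset.mem_biUnion.mpr ⟨C, hC, h⟩)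
  simp only [hbad, Finset.mem_filter, not_and] at hTnot
  have := hTnot hTU
  push_neg at this
  obtain ⟨v, hv, hne⟩ := this
  exact ⟨v, hv, hne⟩
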